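/- Let K ⊆ ℝ^n be a closed convex set and f convex and β-smooth. Let x_{t+1} = Π_K(x_t - (1/β)∇f(x_t)). Then for any y ∈ K, f(x_{t+1}) - f(y) ≤ β⟨x_t - x_{t+1}, x_t - y⟩ - (β/2)‖x_t - x_{t+1}‖². -/

import Mathlib

set_option maxHeartbeats 800000


open RealInnerProductSpace

/-- Gradient inequality for convex functions. -/
lemma grad_convex_ineq {n : ℕ} (f : EuclideanSpace ℝ (Fin n) → ℝ)
    (hconv : ConvexOn ℝ Set.univ f) (x y g : EuclideanSpace ℝ (Fin n))
    (hg : HasGradientAt f g x) : f x + ⟪g, y - x⟫ ≤ f y := by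
  have hφ : HasDerivAt (fun t : ℝ => x + t • (y - x)) (y - x) 0 := by
    simpa using ((hasDerivAt_id (0 : ℝ)).smul_const (y - x)).const_add x
  have hF : HasDerivAt (fun t : ℝ => f (x + t • (y - x))) ⟪g, y - x⟫ 0 := by
    have hx0 : x + (0:ℝ) • (y - x) = x := by simp
    have := (hx0 ▸ hg.hasFDerivAt : HasFDerivAt f _ (x + (0:ℝ) • (y - x))).comp_hasDerivAt 0 hφ
    simpa [InnerProductSpace.toDual, Function.comp_def] using this
  have hslope : Filter.Tendsto (slope (fun t : ℝ => f (x + t • (y - x))) 0)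
      (nhdsWithin 0 {(0:ℝ)}ᶜ) (nhds ⟪g, y - x⟫) :=
    hasDerivAt_iff_tendsto_slope.mp hF
  have hslope' : Filter.Tendsto (slope (fun t : ℝ => f (x + t • (y - x))) 0)
      (nhdsWithin 0 (Set.Ioi 0)) (nhds ⟪g, y - x⟫) :=
    hslope.mono_left (nhdsWithin_mono 0 (fun t ht => ne_of_gt ht))
  have hev : ∀ᶠ t in nhdsWithin (0:ℝ) (Set.Ioi 0),
      slope (fun t : ℝ => f (x + t • (y - x))) 0 t ≤ f y - f x := by
    filter_upwards [Ioo_mem_nhdsGT_of_mem (by norm_num : (0:ℝ) ∈ Set.Ico 0 1)] with t ht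
    obtain ⟨ht0, ht1⟩ := ht
    have hc := hconv.2 (Set.mem_univ x) (Set.mem_univ y)
      (by linarith : (0:ℝ) ≤ 1 - t) (le_of_lt ht0) (by ring)
    have hx : x + t • (y - x) = (1 - t) • x + t • y := by
      simp [smul_sub, sub_smul]; abel
    rw [slope_def_field]
    simp only [hx, sub_zero, zero_smul, add_zero, smul_eq_mul] at hc ⊢
    rw [div_le_iff₀ ht0]
    nlinarith [hc]

  have := le_of_tendsto hslope' hev
  linarith
/-- Key claim for projected smooth gradient descent: one projected gradient step
satisfies `f(x_{t+1}) - f(y) ≤ β⟨x_t - x_{t+1}, x_t - y⟩ - (β/2)‖x_t - x_{t+1}‖²`. -/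
theorem projected_smooth_step_claim {n : ℕ} (K : Set (EuclideanSpace ℝ (Fin n)))
    (hKclosed : IsClosed K) (hKconv : Convex ℝ K)
    (f : EuclideanSpace ℝ (Fin n) → ℝ)
    (f' : EuclideanSpace ℝ (Fin n) → EuclideanSpace ℝ (Fin n))
    (hconv : ConvexOn ℝ Set.univ f)
    (hdiff : ∀ x, HasGradientAt f (f' x) x)
    (β : ℝ) (hβ : 0 < β)
    (hsmooth : ∀ x y, f y ≤ f x + ⟪f' x, y - x⟫ + β / 2 * ‖y - x‖ ^ 2)
    (xt xnext : EuclideanSpace ℝ (Fin n)) (hxnextK : xnext ∈ K)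
    (hproj : ∀ p ∈ K, ‖xnext - (xt - (1 / β) • f' xt)‖ ≤ ‖p - (xt - (1 / β) • f' xt)‖)
    (y : EuclideanSpace ℝ (Fin n)) (hy : y ∈ K) :
    f xnext - f y ≤ β * ⟪xt - xnext, xt - y⟫ - β / 2 * ‖xt - xnext‖ ^ 2 := by
  set g := f' xt with hg
  set z := xt - (1 / β) • g with hz
  -- projection variational inequality
  have hinf : ‖z - xnext‖ = ⨅ w : K, ‖z - w‖ := by
    haveI : Nonempty K := ⟨⟨xnext, hxnextK⟩⟩
    apply le_antisymm
    · exact le_ciInf fun w => by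
        simpa [norm_sub_rev] using hproj w w.2
    · have hbdd : BddBelow (Set.range fun w : K => ‖z - w‖) := by
        refine ⟨0, ?_⟩; rintro _ ⟨w, rfl⟩; exact norm_nonneg _
      exact ciInf_le hbdd ⟨xnext, hxnextK⟩
  have hvar : ⟪z - xnext, y - xnext⟫ ≤ 0 :=
    ((norm_eq_iInf_iff_real_inner_le_zero hKconv hxnextK).mp hinf) y hy
  have hvar' : ⟪g, y - xnext⟫ ≥ β * ⟪xt - xnext, y - xnext⟫ := by
    have : ⟪xt - xnext, y - xnext⟫ - (1/β) * ⟪g, y - xnext⟫ ≤ 0 := by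
      have h := hvar
      rw [hz] at h
      have hre : xt - (1/β) • g - xnext = (xt - xnext) - (1/β) • g := by abel
      rw [hre, inner_sub_left, real_inner_smul_left] at h
      linarith
    have hβ' : (0:ℝ) < 1/β := by positivity
    rw [ge_iff_le, ← sub_nonpos]
    have := mul_nonpos_of_nonneg_of_nonpos (le_of_lt hβ) this
    field_simp at this ⊢
    nlinarith [this]
  -- smoothness and convexity
  have h1 : f xnext ≤ f xt + ⟪g, xnext - xt⟫ + β / 2 * ‖xnext - xt‖ ^ 2 := hsmooth xt xnext
  have h2 : f xt + ⟪g, y - xt⟫ ≤ f y := grad_convex_ineq f hconv xt y g (hdiff xt)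
  have hsum : ⟪g, xnext - xt⟫ + ⟪g, xt - y⟫ = ⟪g, xnext - y⟫ := by
    rw [← inner_add_right]; congr 1; abel
  have hiy : ⟪g, xt - y⟫ = -⟪g, y - xt⟫ := by
    rw [← inner_neg_right]; congr 1; abel
  have hsplit : ⟪xt - xnext, y - xnext⟫ = ⟪xt - xnext, y - xt⟫ + ‖xt - xnext‖^2 := by
    rw [← real_inner_self_eq_norm_sq, ← inner_add_right]
    congr 1; abel
  have hnx : ‖xnext - xt‖ = ‖xt - xnext‖ := norm_sub_rev _ _
  have hinny : ⟪g, xnext - y⟫ = -⟪g, y - xnext⟫ := by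
    rw [← inner_neg_right]; congr 1; abel
  have hiy2 : ⟪xt - xnext, xt - y⟫ = -⟪xt - xnext, y - xt⟫ := by
    rw [← inner_neg_right]; congr 1; abel
  have hnx2 : ‖xnext - xt‖ ^ 2 = ‖xt - xnext‖ ^ 2 := by rw [hnx]
  have hβA : β * ⟪xt - xnext, y - xnext⟫
      = β * ⟪xt - xnext, y - xt⟫ + β * ‖xt - xnext‖ ^ 2 := by rw [hsplit]; ring
  have hβiy2 : β * ⟪xt - xnext, xt - y⟫ = -(β * ⟪xt - xnext, y - xt⟫) := by
    rw [hiy2]; ring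
  have hβn2 : β / 2 * ‖xnext - xt‖ ^ 2 = β / 2 * ‖xt - xnext‖ ^ 2 := by rw [hnx2]
  have hrel : β * ‖xt - xnext‖ ^ 2
      = β / 2 * ‖xt - xnext‖ ^ 2 + β / 2 * ‖xt - xnext‖ ^ 2 := by ring
  linarith [hvar', h1, h2, hsum, hiy, hβA, hinny, hβiy2, hβn2, hrel]
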